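/- In the two-mode squeezing toy model, the entanglement entropy S(t) = ln(cosh(t)²) − sinh(t)²·ln(tanh(t)²) has divergent initial acceleration: the second derivative of S tends to +∞ as t → 0⁺, i.e. Tendsto (fun t => deriv (deriv S) t) (𝓝[>] 0) atTop. -/

import Mathlib

open Filter Real

/-- The first derivative of `S` on `(0, ∞)`. -/
noncomputable def gAux (t : ℝ) : ℝ :=
  2 * Real.sinh t * Real.cosh t *
    (Real.log (Real.cosh t ^ 2) - Real.log (Real.sinh t ^ 2))

lemma hasDerivAt_gAux {t : ℝ} (ht : 0 < t) :
    HasDerivAt gAux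
      (2 * (Real.cosh t ^ 2 + Real.sinh t ^ 2) *
        (Real.log (Real.cosh t ^ 2) - Real.log (Real.sinh t ^ 2)) - 4) t := by
  have hc : Real.cosh t ≠ 0 := (Real.cosh_pos t).ne'
  have hs : Real.sinh t ≠ 0 := (Real.sinh_pos_iff.mpr ht).ne'
  have hc2 : Real.cosh t ^ 2 ≠ 0 := pow_ne_zero _ hc
  have hs2 : Real.sinh t ^ 2 ≠ 0 := pow_ne_zero _ hs
  have hcosh := Real.hasDerivAt_cosh t
  have hsinh := Real.hasDerivAt_sinh t
  have hlc : HasDerivAt (fun x => Real.log (Real.cosh x ^ 2))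
      ((2 * Real.cosh t ^ 1 * Real.sinh t) / Real.cosh t ^ 2) t :=
    (hcosh.pow 2).log hc2
  have hls : HasDerivAt (fun x => Real.log (Real.sinh x ^ 2))
      ((2 * Real.sinh t ^ 1 * Real.cosh t) / Real.sinh t ^ 2) t :=
    (hsinh.pow 2).log hs2
  have h := (((hsinh.const_mul 2).mul hcosh).mul (hlc.sub hls))
  have hpyth : Real.cosh t ^ 2 - Real.sinh t ^ 2 = 1 := Real.cosh_sq_sub_sinh_sq t
  refine h.congr_deriv (Eq.symm ?_)
  simp only [Pi.mul_apply, Pi.sub_apply]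
  field_simp
  linear_combination 4 * hpyth

lemma hasDerivAt_S {S : ℝ → ℝ}
    (hS : ∀ t : ℝ, S t
      = Real.log (Real.cosh t ^ 2) - Real.sinh t ^ 2 * Real.log (Real.tanh t ^ 2))
    {t : ℝ} (ht : 0 < t) : HasDerivAt S (gAux t) t := by
  have hc : Real.cosh t ≠ 0 := (Real.cosh_pos t).ne'
  have hs : Real.sinh t ≠ 0 := (Real.sinh_pos_iff.mpr ht).ne'
  have hc2 : Real.cosh t ^ 2 ≠ 0 := pow_ne_zero _ hc
  have hs2 : Real.sinh t ^ 2 ≠ 0 := pow_ne_zero _ hs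
  have hcosh := Real.hasDerivAt_cosh t
  have hsinh := Real.hasDerivAt_sinh t
  have hlc : HasDerivAt (fun x => Real.log (Real.cosh x ^ 2))
      ((2 * Real.cosh t ^ 1 * Real.sinh t) / Real.cosh t ^ 2) t :=
    (hcosh.pow 2).log hc2
  have hls : HasDerivAt (fun x => Real.log (Real.sinh x ^ 2))
      ((2 * Real.sinh t ^ 1 * Real.cosh t) / Real.sinh t ^ 2) t :=
    (hsinh.pow 2).log hs2
  -- F is the rewritten form of S near t
  have hF : HasDerivAt (fun x => Real.log (Real.cosh x ^ 2) -
      Real.sinh x ^ 2 * (Real.log (Real.sinh x ^ 2) - Real.log (Real.cosh x ^ 2)))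
      ((2 * Real.cosh t ^ 1 * Real.sinh t) / Real.cosh t ^ 2 -
        ((2 * Real.sinh t ^ 1 * Real.cosh t) * (Real.log (Real.sinh t ^ 2) -
          Real.log (Real.cosh t ^ 2)) +
         Real.sinh t ^ 2 * ((2 * Real.sinh t ^ 1 * Real.cosh t) / Real.sinh t ^ 2 -
           (2 * Real.cosh t ^ 1 * Real.sinh t) / Real.cosh t ^ 2))) t :=
    hlc.sub (((hsinh.pow 2).mul (hls.sub hlc)))
  have heq : S =ᶠ[nhds t] (fun x => Real.log (Real.cosh x ^ 2) -
      Real.sinh x ^ 2 * (Real.log (Real.sinh x ^ 2) - Real.log (Real.cosh x ^ 2))) := by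
    filter_upwards [Ioi_mem_nhds ht] with x hx
    have hsx : Real.sinh x ≠ 0 := (Real.sinh_pos_iff.mpr hx).ne'
    have hcx : Real.cosh x ≠ 0 := (Real.cosh_pos x).ne'
    rw [hS x, Real.tanh_eq_sinh_div_cosh, div_pow,
      Real.log_div (pow_ne_zero _ hsx) (pow_ne_zero _ hcx)]
  have h := hF.congr_of_eventuallyEq heq
  have hpyth : Real.cosh t ^ 2 - Real.sinh t ^ 2 = 1 := Real.cosh_sq_sub_sinh_sq t
  refine h.congr_deriv (Eq.symm ?_)
  simp only [gAux]
  field_simp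
  linear_combination hpyth

/-- In the two-mode squeezing toy model, the entanglement entropy
`S(t) = ln(cosh² t) - sinh² t · ln(tanh² t)` has divergent initial acceleration:
`S''(t) → +∞` as `t → 0⁺`. -/
theorem two_mode_squeezing_entropy_second_deriv_diverges
    (S : ℝ → ℝ)
    (hS : ∀ t : ℝ, S t
      = Real.log (Real.cosh t ^ 2) - Real.sinh t ^ 2 * Real.log (Real.tanh t ^ 2)) :
    Tendsto (fun t : ℝ => deriv (deriv S) t) (nhdsWithin 0 (Set.Ioi 0)) atTop := by
  have key : ∀ t : ℝ, 0 < t → deriv (deriv S) t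
      = 2 * (Real.cosh t ^ 2 + Real.sinh t ^ 2) *
        (Real.log (Real.cosh t ^ 2) - Real.log (Real.sinh t ^ 2)) - 4 := by
    intro t ht
    have h1 : deriv S =ᶠ[nhds t] gAux := by
      filter_upwards [Ioi_mem_nhds ht] with x hx
      exact (hasDerivAt_S hS hx).deriv
    rw [Filter.EventuallyEq.deriv_eq h1]
    exact (hasDerivAt_gAux ht).deriv
  have htend : Tendsto (fun t : ℝ =>
      2 * (Real.cosh t ^ 2 + Real.sinh t ^ 2) *
        (Real.log (Real.cosh t ^ 2) - Real.log (Real.sinh t ^ 2)) - 4)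
      (nhdsWithin 0 (Set.Ioi 0)) atTop := by
    apply Filter.tendsto_atTop_add_const_right
    apply Filter.Tendsto.pos_mul_atTop (show (0:ℝ) < 2 by norm_num)
    · have : Tendsto (fun t : ℝ => 2 * (Real.cosh t ^ 2 + Real.sinh t ^ 2))
          (nhds 0) (nhds 2) := by
        have : Continuous (fun t : ℝ => 2 * (Real.cosh t ^ 2 + Real.sinh t ^ 2)) := by
          continuity
        have h0 := this.tendsto 0
        simpa using h0
      exact this.mono_left nhdsWithin_le_nhds
    · have h1 : Tendsto (fun t : ℝ => Real.log (Real.cosh t ^ 2))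
          (nhdsWithin 0 (Set.Ioi 0)) (nhds 0) := by
        have hcont : ContinuousAt (fun t : ℝ => Real.log (Real.cosh t ^ 2)) 0 := by
          apply (Real.continuousAt_log (by norm_num)).comp
          exact (Real.continuous_cosh.pow 2).continuousAt
        have := hcont.tendsto
        simp only [Real.cosh_zero, one_pow, Real.log_one] at this
        exact this.mono_left nhdsWithin_le_nhds
      have h2 : Tendsto (fun t : ℝ => Real.log (Real.sinh t ^ 2))
          (nhdsWithin 0 (Set.Ioi 0)) atBot := by
        apply Real.tendsto_log_nhdsGT_zero.comp
        rw [tendsto_nhdsWithin_iff]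
        constructor
        · have : ContinuousAt (fun t : ℝ => Real.sinh t ^ 2) 0 :=
            (Real.continuous_sinh.pow 2).continuousAt
          have := this.tendsto
          simp only [Real.sinh_zero, zero_pow, ne_eq, OfNat.ofNat_ne_zero,
            not_false_eq_true] at this
          exact this.mono_left nhdsWithin_le_nhds
        · filter_upwards [self_mem_nhdsWithin] with x hx
          exact pow_pos (Real.sinh_pos_iff.mpr hx) 2
      have h3 : Tendsto (fun t : ℝ => -Real.log (Real.sinh t ^ 2))
          (nhdsWithin 0 (Set.Ioi 0)) atTop := by
        exact Filter.tendsto_neg_atTop_iff.mpr h2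
      have := h1.add_atTop h3
      simpa [sub_eq_add_neg] using this
  refine htend.congr' ?_
  filter_upwards [self_mem_nhdsWithin] with t ht
  exact (key t ht).symm
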